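/- arXiv:1702.08493 — 2 statements merged into one kernel-verified Lean document; each statement's English description precedes it below -/
import Mathlib

section
/- Let G : ℝ → Matrix n n ℂ and let {ψₖ(t)}, {φₖ(t)} (k = 1,…,N) be differentiable solutions of i ψₖ' = G ψₖ and i φₖ' = G† φₖ such that at t = 0 they satisfy the completeness relation Σₖ ψₖ(0) ⬝ φₖ(0)† = I (sum of rank-one matrices |ψₖ⟩⟨φₖ|). Then Σₖ ψₖ(t) ⬝ φₖ(t)† = I for all t. -/
open Matrix Set

theorem completeness_preserved {n : Type*} [Fintype n] [DecidableEq n]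
    (N : ℕ) (hcard : Fintype.card n = N)
    (G : ℝ → Matrix n n ℂ) (hG : Continuous G)
    (ψ φ : Fin N → ℝ → n → ℂ)
    (hψ : ∀ k t i, HasDerivAt (fun s => ψ k s i)
      (((-Complex.I) • (G t).mulVec (ψ k t)) i) t)
    (hφ : ∀ k t i, HasDerivAt (fun s => φ k s i)
      (((-Complex.I) • ((G t)ᴴ).mulVec (φ k t)) i) t)
    (hcomp : ∑ k, Matrix.vecMulVec (ψ k 0) (star (φ k 0)) = (1 : Matrix n n ℂ)) :
    ∀ t, ∑ k, Matrix.vecMulVec (ψ k t) (star (φ k t)) = (1 : Matrix n n ℂ) := by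
  intro t₁
  -- entrywise derivative
  have hFd : ∀ (t : ℝ) (i j : n), HasDerivAt (fun s => ∑ k, ψ k s i * star (φ k s j))
      (-Complex.I * ((∑ m, G t i m * ∑ k, ψ k t m * star (φ k t j))
        - ∑ m, (∑ k, ψ k t i * star (φ k t m)) * G t m j)) t := by
    intro t i j
    have h2 := HasDerivAt.fun_sum (fun k (_ : k ∈ Finset.univ) =>
      ((hψ k t i).fun_mul ((hφ k t j).star)))
    convert h2 using 1
    · rfl
    simp only [Matrix.mulVec, dotProduct, Pi.smul_apply, smul_eq_mul,
      conjTranspose_apply, star_sum, star_mul', star_star, star_neg,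
      Complex.star_def, Complex.conj_I, map_sum, neg_mul, Finset.mul_sum, Finset.sum_mul]
    simp only [Complex.conj_conj, neg_neg, mul_sub, Finset.sum_add_distrib, neg_sub]
    rw [Finset.sum_comm (s := Finset.univ) (t := Finset.univ)
      (f := fun k m => -(Complex.I * (G t i m * ψ k t m) * (starRingEnd ℂ) (φ k t j)))]
    rw [Finset.sum_comm (s := Finset.univ) (t := Finset.univ)
      (f := fun k m => ψ k t i * (Complex.I * (G t m j * (starRingEnd ℂ) (φ k t m))))]
    rw [sub_eq_add_neg, add_comm]
    congr 1
    · simp only [Finset.mul_sum]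
      simp only [← Finset.sum_neg_distrib]
      exact Finset.sum_congr rfl fun m _ => Finset.sum_congr rfl fun k _ => by ring
    · simp only [Finset.mul_sum]
      exact Finset.sum_congr rfl fun m _ => Finset.sum_congr rfl fun k _ => by ring
  set F : ℝ → n → n → ℂ := fun t i j => ∑ k, ψ k t i * star (φ k t j) with hFdef
  have hFc : Continuous F :=
    continuous_pi fun i => continuous_pi fun j =>
      continuous_iff_continuousAt.2 fun t => (hFd t i j).continuousAt
  -- interval
  set a : ℝ := -(|t₁| + 1) with ha
  set b : ℝ := |t₁| + 1 with hb
  have habs : (0:ℝ) ≤ |t₁| := abs_nonneg _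
  have hab : a < b := by simp only [ha, hb]; linarith
  have ht0 : (0:ℝ) ∈ Ioo a b := ⟨by simp [ha]; linarith, by simp [hb]; linarith⟩
  have ht1 : t₁ ∈ Icc a b := ⟨by simp only [ha]; cases abs_cases t₁ <;> linarith [neg_abs_le t₁],
    by simp only [hb]; linarith [le_abs_self t₁]⟩
  -- clamp
  set c : ℝ → ℝ := fun t => max a (min b t) with hc
  have hcmem : ∀ t, c t ∈ Icc a b := fun t =>
    ⟨le_max_left _ _, max_le hab.le (min_le_left _ _)⟩
  have hceq : ∀ t ∈ Icc a b, c t = t := by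
    intro t ht
    simp only [hc]
    rw [min_eq_right ht.2, max_eq_right ht.1]
  -- entry bound on the compact interval
  have hGe : ∀ i j, Continuous (fun s => G s i j) := by
    intro i j
    exact (continuous_apply j).comp ((continuous_apply i).comp hG)
  obtain ⟨C, hC⟩ : ∃ C : ℝ, ∀ s ∈ Icc a b, ∀ i j, ‖G s i j‖ ≤ C := by
    obtain ⟨C, hC⟩ := (isCompact_Icc (a := a) (b := b)).exists_bound_of_continuousOn
      (f := fun s => ∑ i, ∑ j, ‖G s i j‖)
      (Continuous.continuousOn (by
        exact continuous_finset_sum _ fun i _ => continuous_finset_sum _ fun j _ =>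
          (hGe i j).norm))
    refine ⟨C, fun s hs i j => ?_⟩
    have h1 : ‖G s i j‖ ≤ ∑ i', ∑ j', ‖G s i' j'‖ := by
      calc ‖G s i j‖ ≤ ∑ j', ‖G s i j'‖ :=
            Finset.single_le_sum (f := fun j' => ‖G s i j'‖)
              (fun _ _ => norm_nonneg _) (Finset.mem_univ j)
        _ ≤ ∑ i', ∑ j', ‖G s i' j'‖ :=
            Finset.single_le_sum (f := fun i' => ∑ j', ‖G s i' j'‖)
              (fun _ _ => Finset.sum_nonneg fun _ _ =>
              norm_nonneg _) (Finset.mem_univ i)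
    exact h1.trans ((le_abs_self _).trans (hC s hs))
  -- handle the degenerate case of empty index type
  rcases isEmpty_or_nonempty n with hn | hn
  · ext i j; exact isEmptyElim i
  have hC0 : 0 ≤ C := le_trans (norm_nonneg
      (G 0 (Classical.arbitrary n) (Classical.arbitrary n)))
    (hC 0 (Ioo_subset_Icc_self ht0) _ _)
  -- the (clamped) vector field
  set v : ℝ → (n → n → ℂ) → (n → n → ℂ) := fun t x i j =>
    -Complex.I * ((∑ m, G (c t) i m * x m j) - ∑ m, x i m * G (c t) m j) with hv
  set K : NNReal := Real.toNNReal (2 * N * C) with hK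
  have hKval : (K : ℝ) = 2 * N * C := Real.coe_toNNReal _ (by positivity)
  have hlip : ∀ t, LipschitzWith K (v t) := by
    intro t
    apply LipschitzWith.of_dist_le_mul
    intro x y
    rw [dist_eq_norm, dist_eq_norm, hKval]
    have h2NC : (0:ℝ) ≤ 2 * N * C * ‖x - y‖ := by positivity
    refine (pi_norm_le_iff_of_nonneg h2NC).mpr fun i => ?_
    refine (pi_norm_le_iff_of_nonneg h2NC).mpr fun j => ?_
    have hd : ∀ p q, ‖x p q - y p q‖ ≤ ‖x - y‖ := by
      intro p q
      calc ‖x p q - y p q‖ = ‖(x - y) p q‖ := by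
            simp
        _ ≤ ‖(x - y) p‖ := norm_le_pi_norm ((x - y) p) q
        _ ≤ ‖x - y‖ := norm_le_pi_norm (x - y) p
    have hentry : (v t x - v t y) i j
        = -Complex.I * ((∑ m, G (c t) i m * (x m j - y m j))
          - ∑ m, (x i m - y i m) * G (c t) m j) := by
      simp only [hv, Pi.sub_apply]
      rw [← mul_sub]
      congr 1
      rw [sub_sub_sub_comm, ← Finset.sum_sub_distrib, ← Finset.sum_sub_distrib]
      congr 1 <;> exact Finset.sum_congr rfl fun m _ => by ring
    have hS1 : ‖∑ m, G (c t) i m * (x m j - y m j)‖ ≤ (N : ℝ) * (C * ‖x - y‖) := by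
      refine (norm_sum_le _ _).trans ?_
      calc ∑ m, ‖G (c t) i m * (x m j - y m j)‖ ≤ ∑ _m : n, C * ‖x - y‖ :=
            Finset.sum_le_sum fun m _ => by
              rw [norm_mul]
              exact mul_le_mul (by simpa using hC _ (hcmem t) i m)
                (by simpa using hd m j) (norm_nonneg _) hC0
        _ = (N : ℝ) * (C * ‖x - y‖) := by
            rw [Finset.sum_const, Finset.card_univ, hcard, nsmul_eq_mul]
    have hS2 : ‖∑ m, (x i m - y i m) * G (c t) m j‖ ≤ (N : ℝ) * (C * ‖x - y‖) := by
      refine (norm_sum_le _ _).trans ?_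
      calc ∑ m, ‖(x i m - y i m) * G (c t) m j‖ ≤ ∑ _m : n, ‖x - y‖ * C :=
            Finset.sum_le_sum fun m _ => by
              rw [norm_mul]
              exact mul_le_mul (by simpa using hd i m)
                (by simpa using hC _ (hcmem t) m j)
                (norm_nonneg _) (norm_nonneg _)
        _ = (N : ℝ) * (C * ‖x - y‖) := by
            rw [Finset.sum_const, Finset.card_univ, hcard, nsmul_eq_mul]; ring
    calc ‖(v t x - v t y) i j‖
        = ‖(∑ m, G (c t) i m * (x m j - y m j)) - ∑ m, (x i m - y i m) * G (c t) m j‖ := by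
          rw [hentry, norm_mul, norm_neg, Complex.norm_I, one_mul]
      _ ≤ ‖∑ m, G (c t) i m * (x m j - y m j)‖ + ‖∑ m, (x i m - y i m) * G (c t) m j‖ :=
          norm_sub_le _ _
      _ ≤ (N : ℝ) * (C * ‖x - y‖) + (N : ℝ) * (C * ‖x - y‖) := add_le_add hS1 hS2
      _ = 2 * N * C * ‖x - y‖ := by ring
  -- the constant function 1 is a solution
  have hone : ∀ t : ℝ, v t (fun i j => (1 : Matrix n n ℂ) i j) = 0 := by
    intro t
    funext i j
    simp [hv, Matrix.one_apply, mul_ite, ite_mul, Finset.sum_ite_eq, Finset.sum_ite_eq']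
  -- apply uniqueness of ODE solutions
  have hgd : ∀ t : ℝ, HasDerivAt (fun _ : ℝ => (fun i j => (1 : Matrix n n ℂ) i j))
      (v t (fun i j => (1 : Matrix n n ℂ) i j)) t := by
    intro t
    rw [hone t]
    exact hasDerivAt_const _ _
  have hFd' : ∀ t ∈ Ioo a b, HasDerivAt F (v t (F t)) t := by
    intro t ht
    refine hasDerivAt_pi.2 fun i => hasDerivAt_pi.2 fun j => ?_
    have : v t (F t) i j = -Complex.I * ((∑ m, G t i m * F t m j) - ∑ m, F t i m * G t m j) := by
      simp only [hv, hceq t (Ioo_subset_Icc_self ht)]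
    rw [this]
    exact hFd t i j
  have heq0 : F 0 = (fun i j => (1 : Matrix n n ℂ) i j) := by
    funext i j
    have := congrFun (congrFun (congrArg (fun M : Matrix n n ℂ => (M : Matrix n n ℂ)) hcomp) i) j
    simpa [hFdef, Matrix.sum_apply, Matrix.vecMulVec_apply] using this
  have hEq := ODE_solution_unique_of_mem_Icc (v := v) (s := fun _ => Set.univ)
    (fun t _ => (hlip t).lipschitzOnWith (s := Set.univ)) ht0
    (hFc.continuousOn)
    (fun t ht => hFd' t ht) (fun _ _ => Set.mem_univ _)
    (continuous_const.continuousOn)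
    (fun t _ => hgd t) (fun _ _ => Set.mem_univ _)
    heq0
  have hfin := hEq ht1
  ext i j
  have := congrFun (congrFun hfin i) j
  simpa [hFdef, Matrix.sum_apply, Matrix.vecMulVec_apply] using this
end

section
/- Let G : ℝ → Matrix n n ℂ be continuous, ψ a solution of i ψ' = G ψ, φ a solution of i φ' = G† φ, and Q : ℝ → Matrix n n ℂ a differentiable matrix function satisfying i Q'(t) = Q(t) Σ(t) − Σ(t) Q(t), where Σ(t) = H(t) − G(t) and H is any differentiable matrix function with i H'(t) = G(t) H(t) − H(t) G(t). Then the expectation value ⟨φ(t), H(t) ψ(t)⟩ is constant in time. -/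
open Matrix

theorem energy_expectation_constant {n : Type*} [Fintype n] [DecidableEq n]
    (G : ℝ → Matrix n n ℂ) (hG : Continuous G)
    (ψ φ : ℝ → n → ℂ)
    (hψ : ∀ t i, HasDerivAt (fun s => ψ s i)
      (((-Complex.I) • (G t).mulVec (ψ t)) i) t)
    (hφ : ∀ t i, HasDerivAt (fun s => φ s i)
      (((-Complex.I) • ((G t)ᴴ).mulVec (φ t)) i) t)
    (H : ℝ → Matrix n n ℂ)
    (hH : ∀ t i j, HasDerivAt (fun s => H s i j)
      (((-Complex.I) • (G t * H t - H t * G t)) i j) t)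
    (Sig : ℝ → Matrix n n ℂ) (hSig : ∀ t, Sig t = H t - G t)
    (Q : ℝ → Matrix n n ℂ)
    (hQ : ∀ t i j, HasDerivAt (fun s => Q s i j)
      (((-Complex.I) • (Q t * Sig t - Sig t * Q t)) i j) t) :
    ∀ t, star (φ t) ⬝ᵥ (H t).mulVec (ψ t) = star (φ 0) ⬝ᵥ (H 0).mulVec (ψ 0) := by
  have key : ∀ t, HasDerivAt (fun s => star (φ s) ⬝ᵥ (H s).mulVec (ψ s)) 0 t := by
    intro t
    have h1 : HasDerivAt (fun s => star (φ s) ⬝ᵥ (H s).mulVec (ψ s))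
        (star ((-Complex.I) • ((G t)ᴴ).mulVec (φ t)) ⬝ᵥ (H t).mulVec (ψ t)
          + (star (φ t) ⬝ᵥ ((-Complex.I) • (G t * H t - H t * G t)).mulVec (ψ t)
            + star (φ t) ⬝ᵥ (H t).mulVec ((-Complex.I) • (G t).mulVec (ψ t)))) t := by
      have hterm : ∀ i, HasDerivAt
          (fun s => star (φ s i) * ∑ j, H s i j * ψ s j)
          (star (((-Complex.I) • ((G t)ᴴ).mulVec (φ t)) i) * ∑ j, H t i j * ψ t j
            + star (φ t i) * ∑ j, (((-Complex.I) • (G t * H t - H t * G t)) i j * ψ t j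
              + H t i j * ((-Complex.I) • (G t).mulVec (ψ t)) j)) t := by
        intro i
        exact ((hφ t i).star).mul
          (HasDerivAt.fun_sum (fun j _ => (hH t i j).mul (hψ t j)))
      have := HasDerivAt.fun_sum (u := Finset.univ) (fun i _ => hterm i)
      convert this using 1
      · rfl
      all_goals simp [dotProduct, mulVec, Finset.sum_add_distrib, mul_add, Finset.mul_sum]
    have h2 : star ((-Complex.I) • ((G t)ᴴ).mulVec (φ t)) ⬝ᵥ (H t).mulVec (ψ t)
          + (star (φ t) ⬝ᵥ ((-Complex.I) • (G t * H t - H t * G t)).mulVec (ψ t)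
            + star (φ t) ⬝ᵥ (H t).mulVec ((-Complex.I) • (G t).mulVec (ψ t))) = 0 := by
      simp only [star_smul, Matrix.star_mulVec, conjTranspose_conjTranspose,
        Matrix.smul_mulVec, Matrix.mulVec_smul, Matrix.sub_mulVec,
        smul_dotProduct, dotProduct_smul, dotProduct_sub,
        ← Matrix.mulVec_mulVec, ← Matrix.dotProduct_mulVec, star_neg, RCLike.star_def,
        Complex.conj_I, smul_eq_mul]
      ring
    rwa [h2] at h1
  intro t
  exact is_const_of_deriv_eq_zero (fun x => (key x).differentiableAt)
    (fun x => (key x).deriv) t 0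
end
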